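/- Let 0 < p < ∞. Then there exists a ℂ-linear subspace F of the Banach space c₀ = C₀(ℕ, ℂ) such that F is dense in c₀ and every nonzero element f of F does not belong to ℓ^p, i.e. ∑_{n} |f(n)|^p = ∞. -/

import Mathlib

open scoped ZeroAtInfty
open Filter Topology

noncomputable section AGaux

namespace AGaux

/-- a dense sequence in `ℂ` -/
def u : ℕ → ℂ := TopologicalSpace.denseSeq ℂ

lemma hu : DenseRange u := TopologicalSpace.denseRange_denseSeq ℂ

/-- encode `Option` values of `u` -/
def v : ℕ → ℂ
  | 0 => 0
  | (j+1) => u j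

/-- a surjective enumeration of finitely supported `ℕ`-valued sequences -/
def E : ℕ → (ℕ →₀ ℕ) := (exists_surjective_nat (ℕ →₀ ℕ)).choose

lemma E_surj : Function.Surjective E := (exists_surjective_nat (ℕ →₀ ℕ)).choose_spec

def d (k : ℕ) : ℕ →₀ ℕ := E (Nat.unpair k).1

/-- the finitely supported part, support in `[0, k)` -/
def xfun (k n : ℕ) : ℂ := if n < k then v (d k n) else 0

/-- the "bad" part, supported on `{Nat.pair k m : m ∈ ℕ}` -/
def zfun (p : ℝ) (k n : ℕ) : ℝ :=
  if (Nat.unpair n).1 = k then ((k : ℝ) + 1)⁻¹ * (((Nat.unpair n).2 : ℝ) + 1) ^ (-(1/p)) else 0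

def yfun (p : ℝ) (k n : ℕ) : ℂ := xfun k n + (zfun p k n : ℂ)

lemma zfun_nonneg (p : ℝ) (hp : 0 < p) (k n : ℕ) : 0 ≤ zfun p k n := by
  unfold zfun
  split
  · positivity
  · exact le_rfl

lemma zfun_le (p : ℝ) (hp : 0 < p) (k n : ℕ) : zfun p k n ≤ ((k : ℝ) + 1)⁻¹ := by
  unfold zfun
  split
  · have h1 : (((Nat.unpair n).2 : ℝ) + 1) ^ (-(1/p)) ≤ 1 :=
      Real.rpow_le_one_of_one_le_of_nonpos
        (by linarith [Nat.cast_nonneg (α := ℝ) (Nat.unpair n).2])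
        (neg_nonpos.mpr (by positivity))
    have h0 : (0:ℝ) ≤ ((k:ℝ)+1)⁻¹ := by positivity
    simpa using mul_le_of_le_one_right h0 h1
  · positivity

lemma zfun_pair (p : ℝ) (k m : ℕ) :
    zfun p k (Nat.pair k m) = ((k : ℝ) + 1)⁻¹ * ((m : ℝ) + 1) ^ (-(1/p)) := by
  simp [zfun, Nat.unpair_pair]

lemma zfun_ne (p : ℝ) {k n : ℕ} (h : (Nat.unpair n).1 ≠ k) : zfun p k n = 0 := if_neg h

lemma tendsto_aux (p : ℝ) (hp : 0 < p) (k : ℕ) :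
    Tendsto (fun m : ℕ => ((k : ℝ) + 1)⁻¹ * ((m : ℝ) + 1) ^ (-(1/p))) atTop (𝓝 0) := by
  have h1 : Tendsto (fun m : ℕ => ((m : ℝ) + 1)) atTop atTop :=
    tendsto_atTop_add_const_right atTop 1 tendsto_natCast_atTop_atTop
  have h2 := (tendsto_rpow_neg_atTop (by positivity : (0:ℝ) < 1/p)).comp h1
  have h3 := h2.const_mul (((k : ℝ) + 1)⁻¹)
  simpa using h3

lemma tendsto_zfun (p : ℝ) (hp : 0 < p) (k : ℕ) :
    Tendsto (fun n => zfun p k n) atTop (𝓝 0) := by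
  rw [← Nat.cofinite_eq_atTop, Metric.tendsto_nhds]
  intro ε hε
  rw [eventually_cofinite]
  have hfin : {m : ℕ | ¬ ((k : ℝ) + 1)⁻¹ * ((m : ℝ) + 1) ^ (-(1/p)) < ε}.Finite := by
    have := (tendsto_aux p hp k).eventually_lt_const hε
    rw [← Nat.cofinite_eq_atTop, eventually_cofinite] at this
    exact this
  apply Set.Finite.subset (hfin.image (Nat.pair k))
  intro n hn
  simp only [Set.mem_setOf_eq, Real.dist_eq, sub_zero] at hn
  by_cases h : (Nat.unpair n).1 = k
  · refine ⟨(Nat.unpair n).2, ?_, ?_⟩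
    · intro hc
      apply hn
      rw [zfun, if_pos h, abs_of_nonneg (by positivity)]
      exact hc
    · rw [← h]; exact Nat.pair_unpair n
  · exact absurd (by rw [zfun_ne p h]; simpa using hε) hn

lemma tendsto_xfun (k : ℕ) : Tendsto (fun n => xfun k n) atTop (𝓝 0) := by
  apply Tendsto.congr' _ tendsto_const_nhds
  filter_upwards [eventually_ge_atTop k] with n hn
  exact (if_neg (by omega)).symm

/-- the generators -/
def Y (p : ℝ) (hp : 0 < p) (k : ℕ) : C₀(ℕ, ℂ) :=
  ⟨⟨yfun p k, continuous_of_discreteTopology⟩, by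
    rw [cocompact_eq_atTop (α := ℕ)]
    have hz : Tendsto (fun n => (zfun p k n : ℂ)) atTop (𝓝 0) := by
      have := (Complex.continuous_ofReal.tendsto 0).comp (tendsto_zfun p hp k)
      exact this
    have h := (tendsto_xfun k).add hz
    rw [add_zero] at h
    exact h⟩

lemma Y_apply (p : ℝ) (hp : 0 < p) (k n : ℕ) : Y p hp k n = yfun p k n := rfl

lemma coe_finset_sum (s : Finset ℕ) (g : ℕ → C₀(ℕ, ℂ)) (n : ℕ) :
    (∑ i ∈ s, g i) n = ∑ i ∈ s, g i n := by
  classical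
  induction s using Finset.induction with
  | empty => rfl
  | insert a s h ih =>
    rw [Finset.sum_insert h, Finset.sum_insert h, ← ih]
    rfl

end AGaux

end AGaux

/-- Let `0 < p < ∞`. There is a dense `ℂ`-linear subspace `F` of the
Banach space `c₀ = C₀(ℕ, ℂ)` every nonzero element of which does not belong to `ℓ^p`. -/
theorem algebraic_genericity_czero_ellP (p : ℝ) (hp : 0 < p) :
    ∃ F : Submodule ℂ C₀(ℕ, ℂ),
      Dense (F : Set C₀(ℕ, ℂ)) ∧
      ∀ f ∈ F, f ≠ 0 → ¬ Summable fun n : ℕ => ‖f n‖ ^ p := by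
  classical
  open AGaux in
  refine ⟨Submodule.span ℂ (Set.range (Y p hp)), ?_, ?_⟩
  · -- density
    rw [Metric.dense_iff]
    intro f ε hε
    set ε' := ε / 3 with hε'def
    have hε' : 0 < ε' := by positivity
    -- tail bound for f
    have hf0 : Tendsto (⇑f) atTop (𝓝 0) := by
      have := f.zero_at_infty'
      rwa [cocompact_eq_atTop (α := ℕ)] at this
    obtain ⟨N, hN⟩ : ∃ N, ∀ n ≥ N, ‖f n‖ < ε' := by
      have := (Metric.tendsto_nhds.mp hf0) ε' hε'
      rw [eventually_atTop] at this
      obtain ⟨N, hN⟩ := this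
      exact ⟨N, fun n hn => by simpa using hN n hn⟩
    -- approximate values of f on [0, N)
    have happrox : ∀ n : ℕ, ∃ j : ℕ, dist (f n) (u j) < ε' := fun n => hu.exists_dist_lt (f n) hε'
    set g : ℕ → ℕ := fun n => if n < N then (happrox n).choose + 1 else 0 with hg
    set c : ℕ →₀ ℕ := Finsupp.onFinset (Finset.range N) g
      (fun a ha => by
        simp only [hg, Finset.mem_range] at ha ⊢
        by_contra h
        rw [if_neg h] at ha
        exact ha rfl) with hc
    obtain ⟨i, hi⟩ := E_surj c
    set k : ℕ := Nat.pair i (max N ⌈1/ε'⌉₊) with hk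
    have hkN : N ≤ k := le_trans (le_max_left _ _) (Nat.right_le_pair _ _)
    have hkC : (⌈1/ε'⌉₊ : ℝ) ≤ k := by
      exact_mod_cast le_trans (le_max_right _ _) (Nat.right_le_pair _ _)
    have hkinv : ((k : ℝ) + 1)⁻¹ < ε' := by
      have h1 : 1/ε' < (k : ℝ) + 1 := lt_of_le_of_lt (le_trans (Nat.le_ceil _) hkC) (by linarith)
      have h2 : (0:ℝ) < (k : ℝ) + 1 := by positivity
      rw [inv_lt_comm₀ h2 hε']
      rwa [one_div] at h1
    have hdk : d k = c := by
      simp [d, hk, Nat.unpair_pair, hi]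
    refine ⟨Y p hp k, ?_, Submodule.subset_span ⟨k, rfl⟩⟩
    rw [Metric.mem_ball, ← ZeroAtInftyContinuousMap.dist_toBCF_eq_dist]
    have key : ∀ n : ℕ, dist ((Y p hp k) n) (f n) ≤ 2 * ε' := by
      intro n
      have hx : ‖f n - xfun k n‖ < ε' := by
        by_cases h1 : n < N
        · rw [xfun, if_pos (lt_of_lt_of_le h1 hkN), hdk]
          have : c n = g n := Finsupp.onFinset_apply
          rw [this, hg]
          simp only [if_pos h1]
          show ‖f n - v ((happrox n).choose + 1)‖ < ε'
          have : v ((happrox n).choose + 1) = u (happrox n).choose := rfl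
          rw [this, ← dist_eq_norm]
          exact (happrox n).choose_spec
        · have hxz : xfun k n = 0 := by
            by_cases h2 : n < k
            · rw [xfun, if_pos h2, hdk]
              have : c n = g n := Finsupp.onFinset_apply
              rw [this, hg]
              simp only [if_neg h1]
              rfl
            · exact if_neg h2
          rw [hxz, sub_zero]
          exact hN n (le_of_not_gt h1)
      have hz : ‖(zfun p k n : ℂ)‖ < ε' := by
        rw [Complex.norm_real, Real.norm_eq_abs, abs_of_nonneg (zfun_nonneg p hp k n)]
        exact lt_of_le_of_lt (zfun_le p hp k n) hkinv
      calc dist ((Y p hp k) n) (f n) = ‖(xfun k n + (zfun p k n : ℂ)) - f n‖ := by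
              rw [dist_eq_norm]; rfl
        _ = ‖-(f n - xfun k n) + (zfun p k n : ℂ)‖ := by ring_nf
        _ ≤ ‖f n - xfun k n‖ + ‖(zfun p k n : ℂ)‖ := by
              refine le_trans (norm_add_le _ _) ?_
              rw [norm_neg]
        _ ≤ 2 * ε' := by linarith [hx.le, hz.le]
    have : dist (Y p hp k).toBCF f.toBCF ≤ 2 * ε' :=
      (BoundedContinuousFunction.dist_le (by positivity)).mpr key
    calc dist (Y p hp k).toBCF f.toBCF ≤ 2 * ε' := this
      _ < ε := by rw [hε'def]; linarith
  · -- non-summability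
    intro f hf hfne hsum
    rw [Finsupp.mem_span_range_iff_exists_finsupp] at hf
    obtain ⟨c, hcf⟩ := hf
    have hcne : c ≠ 0 := by
      rintro rfl
      exact hfne (by simpa using hcf.symm)
    have hsupp : c.support.Nonempty := Finsupp.support_nonempty_iff.mpr hcne
    set K := c.support.max' hsupp with hK
    have hcK : c K ≠ 0 := Finsupp.mem_support_iff.mp (c.support.max'_mem hsupp)
    -- value of f on the K-block
    have hfn : ∀ m : ℕ, f (Nat.pair K m) =
        (c K) * ((((K : ℝ) + 1)⁻¹ * ((m : ℝ) + 1) ^ (-(1/p)) : ℝ) : ℂ) := by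
      intro m
      set n := Nat.pair K m with hn
      have hnK : K ≤ n := Nat.left_le_pair K m
      rw [← hcf]
      rw [Finsupp.sum]
      rw [coe_finset_sum]
      rw [Finset.sum_eq_single K]
      · rw [ZeroAtInftyContinuousMap.coe_smul]
        show (c K) * yfun p K n = _
        rw [yfun]
        have hx : xfun K n = 0 := if_neg (by omega)
        rw [hx, zero_add, hn, zfun_pair]
      · intro i hi hik
        have hiK : i ≤ K := Finset.le_max' _ _ hi
        rw [ZeroAtInftyContinuousMap.coe_smul]
        show (c i) * yfun p i n = 0
        rw [yfun]
        have hx : xfun i n = 0 := if_neg (by omega)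
        have hz : zfun p i n = 0 := zfun_ne p (by rw [hn, Nat.unpair_pair]; exact hik.symm)
        rw [hx, hz]
        simp
      · intro h
        exact absurd (c.support.max'_mem hsupp) h
    -- restrict summability to the K-block
    have hinj : Function.Injective (fun m => Nat.pair K m) := by
      intro a b h
      have := congrArg Nat.unpair h
      simpa [Nat.unpair_pair] using this
    have h2 := hsum.comp_injective hinj
    set A : ℝ := ‖c K‖ * ((K : ℝ) + 1)⁻¹ with hA
    have hApos : 0 < A := by
      rw [hA]
      have : 0 < ‖c K‖ := norm_pos_iff.mpr hcK
      positivity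
    have h3 : Summable (fun m : ℕ => A ^ p * (((m : ℝ) + 1))⁻¹) := by
      apply h2.congr
      intro m
      show ‖f (Nat.pair K m)‖ ^ p = _
      rw [hfn m, norm_mul, Complex.norm_real, Real.norm_eq_abs,
        abs_of_nonneg (by positivity : (0:ℝ) ≤ ((K : ℝ) + 1)⁻¹ * ((m : ℝ) + 1) ^ (-(1/p)))]
      rw [← mul_assoc, ← hA]
      rw [Real.mul_rpow hApos.le (by positivity)]
      congr 1
      rw [← Real.rpow_mul (by positivity : (0:ℝ) ≤ (m:ℝ)+1)]
      rw [show (-(1/p))*p = -1 by field_simp]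
      exact Real.rpow_neg_one _
    have h4 : Summable (fun m : ℕ => (((m : ℝ) + 1))⁻¹) :=
      (summable_mul_left_iff (by positivity : A ^ p ≠ 0)).mp h3
    have h5 : Summable (fun m : ℕ => ((m : ℝ))⁻¹) := by
      rw [← summable_nat_add_iff 1]
      apply h4.congr
      intro m
      push_cast
      ring_nf
    exact Real.not_summable_natCast_inv h5
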